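/- If the distribution of X factorizes with respect to a tree G = (V,E) and has positive marginal densities, then its density satisfies f(x) = ∏_{{v,w} ∈ E} [f_{vw}(x_v,x_w)/(f_v(x_v) f_w(x_w))] · ∏_{v ∈ V} f_v(x_v), where f_v and f_{vw} are the one- and two-dimensional marginal densities. -/

import Mathlib

/-- `g` depends only on the coordinates in `S`. -/
def DependsOnlyOn {V : Type*} {X : V → Type*} (S : Set V) (g : (∀ v, X v) → ℝ) : Prop :=
  ∀ x y : ∀ v, X v, (∀ u ∈ S, x u = y u) → g x = g y

/-- One-dimensional marginal of `f` at coordinate `v`. -/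
def marg1 {V : Type*} [Fintype V] [DecidableEq V] {X : V → Type*} [∀ v, Fintype (X v)]
    [∀ v, DecidableEq (X v)] (f : (∀ v, X v) → ℝ) (v : V) (a : X v) : ℝ :=
  ∑ y : ∀ v, X v, if y v = a then f y else 0

/-- Two-dimensional marginal of `f` at coordinates `v, w`. -/
def marg2 {V : Type*} [Fintype V] [DecidableEq V] {X : V → Type*} [∀ v, Fintype (X v)]
    [∀ v, DecidableEq (X v)] (f : (∀ v, X v) → ℝ) (v w : V) (a : X v) (b : X w) : ℝ :=
  ∑ y : ∀ v, X v, if y v = a ∧ y w = b then f y else 0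

section Sums
variable {V : Type*} [Fintype V] [DecidableEq V] {X : V → Type*} [∀ v, Fintype (X v)]
    [∀ v, DecidableEq (X v)]

/-- L1: summing over the swap-at-coordinate bijection. -/
lemma sum_swap_coord (ℓ : V) (b c : X ℓ) (F : (∀ v, X v) → ℝ) :
    ∑ x : ∀ v, X v, F (Function.update x ℓ (Equiv.swap b c (x ℓ))) = ∑ x : ∀ v, X v, F x := by
  have hinv : Function.Involutive
      (fun x : ∀ v, X v => Function.update x ℓ (Equiv.swap b c (x ℓ))) := by
    intro x
    simp [Function.update_idem, Function.update_eq_self]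
  exact Fintype.sum_bijective _ hinv.bijective _ _ (fun x => rfl)

/-- L2: shifting a fiber. -/
lemma sum_ite_update (ℓ : V) (a c : X ℓ) (F : (∀ v, X v) → ℝ) :
    ∑ x : ∀ v, X v, (if x ℓ = c then F (Function.update x ℓ a) else 0)
      = ∑ x : ∀ v, X v, (if x ℓ = a then F x else 0) := by
  rw [← sum_swap_coord ℓ a c (fun x => if x ℓ = a then F x else 0)]
  refine Finset.sum_congr rfl fun x _ => ?_
  by_cases h : x ℓ = c
  · simp [h, Equiv.swap_apply_right]
  · have h2 : Equiv.swap a c (x ℓ) ≠ a := by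
      intro hh
      apply h
      have := (Equiv.swap a c).injective (a₁ := x ℓ) (a₂ := c)
      exact this (by rw [hh, Equiv.swap_apply_right])
    simp [h, h2]

/-- L3: sum of `F` composed with update. -/
lemma sum_update (ℓ : V) (a : X ℓ) (F : (∀ v, X v) → ℝ) :
    ∑ x : ∀ v, X v, F (Function.update x ℓ a)
      = (Fintype.card (X ℓ) : ℝ) * ∑ x : ∀ v, X v, (if x ℓ = a then F x else 0) := by
  have : ∀ x : ∀ v, X v, F (Function.update x ℓ a)
      = ∑ c : X ℓ, (if x ℓ = c then F (Function.update x ℓ a) else 0) := by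
    intro x; simp
  rw [Finset.sum_congr rfl (fun x _ => this x), Finset.sum_comm]
  rw [Finset.sum_congr rfl (fun c (_ : c ∈ Finset.univ) => sum_ite_update ℓ a c F)]
  simp [Finset.sum_const, nsmul_eq_mul]

/-- L4: splitting a sum according to the value at coordinate ℓ. -/
lemma sum_split (ℓ : V) (P : (∀ v, X v) → Prop) [DecidablePred P] (F : (∀ v, X v) → ℝ) :
    ∑ c : X ℓ, ∑ x : ∀ v, X v, (if x ℓ = c ∧ P x then F x else 0)
      = ∑ x : ∀ v, X v, (if P x then F x else 0) := by
  rw [Finset.sum_comm]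
  refine Finset.sum_congr rfl fun x _ => ?_
  by_cases h : P x <;> simp [h]

/-- L5: if `F` does not depend on coordinate ℓ, fiber sums don't depend on the fiber. -/
lemma sum_ite_fixed (ℓ : V) (a c : X ℓ) (F : (∀ v, X v) → ℝ)
    (hF : ∀ x b, F (Function.update x ℓ b) = F x) :
    ∑ x : ∀ v, X v, (if x ℓ = c then F x else 0)
      = ∑ x : ∀ v, X v, (if x ℓ = a then F x else 0) := by
  rw [← sum_ite_update ℓ a c F]
  refine Finset.sum_congr rfl fun x _ => ?_
  rw [hF]

end Sums

section Base
variable {V : Type*} [Fintype V] [DecidableEq V] {X : V → Type*} [∀ v, Fintype (X v)]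
    [∀ v, DecidableEq (X v)]

lemma marg1_indep (χ : ∀ v, X v → ℝ) (f : (∀ v, X v) → ℝ)
    (hfac : ∀ x, f x = ∏ v, χ v (x v)) (v : V) (a : X v) :
    marg1 f v a = χ v a * ∏ u ∈ Finset.univ.erase v, (∑ b, χ u b) := by
  classical
  have key : ∀ y : ∀ u, X u, (if y v = a then f y else 0)
      = ∏ u, (Function.update (fun u => χ u) v (fun b => if b = a then χ v b else 0)) u (y u) := by
    intro y
    by_cases h : y v = a
    · rw [if_pos h, hfac y, ← Finset.mul_prod_erase Finset.univ _ (Finset.mem_univ v),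
        ← Finset.mul_prod_erase Finset.univ
          (fun u => (Function.update (fun u => χ u) v
            (fun b => if b = a then χ v b else 0)) u (y u)) (Finset.mem_univ v)]
      congr 1
      · simp [h]
      · refine Finset.prod_congr rfl fun u hu => ?_
        rw [Function.update_of_ne (Finset.ne_of_mem_erase hu)]
    · rw [if_neg h]
      rw [← Finset.mul_prod_erase Finset.univ
          (fun u => (Function.update (fun u => χ u) v
            (fun b => if b = a then χ v b else 0)) u (y u)) (Finset.mem_univ v)]
      simp [h]
  rw [marg1, Finset.sum_congr rfl (fun y _ => key y)]
  rw [← Fintype.piFinset_univ, ← Finset.prod_univ_sum]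
  rw [← Finset.mul_prod_erase Finset.univ _ (Finset.mem_univ v)]
  congr 1
  · simp
  · refine Finset.prod_congr rfl fun u hu => ?_
    rw [Function.update_of_ne (Finset.ne_of_mem_erase hu)]

lemma indep_case (χ : ∀ v, X v → ℝ) (f : (∀ v, X v) → ℝ) (hnorm : ∑ x, f x = 1)
    (hfac : ∀ x, f x = ∏ v, χ v (x v)) (x : ∀ v, X v) :
    f x = ∏ v, marg1 f v (x v) := by
  classical
  have hC : ∏ u, (∑ b, χ u b) = 1 := by
    rw [← hnorm, Finset.sum_congr rfl (fun y (_ : y ∈ Finset.univ) => hfac y),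
      ← Fintype.piFinset_univ, ← Finset.prod_univ_sum]
  have hCne : ∀ u, (∑ b, χ u b) ≠ 0 := by
    intro u
    intro h
    rw [← Finset.mul_prod_erase Finset.univ _ (Finset.mem_univ u), h, zero_mul] at hC
    exact one_ne_zero hC.symm
  have herase : ∀ v : V, ∏ u ∈ Finset.univ.erase v, (∑ b, χ u b) = (∑ b, χ v b)⁻¹ := by
    intro v
    have := Finset.prod_erase_mul Finset.univ (fun u => ∑ b, χ u b) (Finset.mem_univ v)
    rw [hC] at this
    exact eq_inv_of_mul_eq_one_left this
  calc f x = (∏ v, χ v (x v)) * 1 := by rw [mul_one, hfac]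
    _ = (∏ v, χ v (x v)) * ∏ v, (∑ b, χ v b)⁻¹ := by
        rw [Finset.prod_inv_distrib, hC, inv_one]
    _ = ∏ v, (χ v (x v) * (∑ b, χ v b)⁻¹) := by rw [Finset.prod_mul_distrib]
    _ = ∏ v, marg1 f v (x v) := by
        refine Finset.prod_congr rfl fun v _ => ?_
        rw [marg1_indep χ f hfac v (x v), herase v]

end Base
section Main
variable {V : Type*} [Fintype V] [DecidableEq V] {X : V → Type*} [∀ v, Fintype (X v)]
    [∀ v, DecidableEq (X v)]

lemma nonempty_of_norm (f : (∀ v, X v) → ℝ) (hnorm : ∑ x, f x = 1) : Nonempty (∀ v, X v) := by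
  by_contra hcon
  rw [not_nonempty_iff] at hcon
  rw [Finset.univ_eq_empty, Finset.sum_empty] at hnorm
  exact one_ne_zero hnorm.symm

lemma marg1_pos (f : (∀ v, X v) → ℝ) (hpos : ∀ x, 0 < f x) (x₀ : ∀ v, X v) (v : V) (a : X v) :
    0 < marg1 f v a := by
  refine Finset.sum_pos' (fun y _ => ?_) ⟨Function.update x₀ v a, Finset.mem_univ _, ?_⟩
  · split_ifs with h
    · exact (hpos y).le
    · exact le_refl 0
  · rw [if_pos (Function.update_self v a x₀)]
    exact hpos _

lemma marg2_symm (f : (∀ v, X v) → ℝ) (v w : V) (a : X v) (b : X w) :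
    marg2 f v w a b = marg2 f w v b a := by
  refine Finset.sum_congr rfl fun y _ => ?_
  exact if_congr and_comm rfl rfl

/-- The marginals over a coordinate sum to the total mass. -/
lemma sum_marg1 (f : (∀ v, X v) → ℝ) (ℓ : V) : ∑ b, marg1 f ℓ b = ∑ x, f x := by
  unfold marg1
  rw [Finset.sum_comm]
  refine Finset.sum_congr rfl fun x _ => ?_
  simp

/-- Transfer lemma: conditioning events not involving coordinate ℓ have the same
probability under `f` and under the ℓ-uniformized version of `f`. -/
lemma sum_ite_avg (ℓ : V) [Nonempty (X ℓ)] (f : (∀ v, X v) → ℝ) (P : (∀ v, X v) → Prop)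
    [DecidablePred P] (hP : ∀ x b, P (Function.update x ℓ b) ↔ P x) :
    ∑ x : ∀ v, X v,
        (if P x then (∑ a, f (Function.update x ℓ a)) / (Fintype.card (X ℓ) : ℝ) else 0)
      = ∑ x : ∀ v, X v, (if P x then f x else 0) := by
  have hN : (Fintype.card (X ℓ) : ℝ) ≠ 0 := Nat.cast_ne_zero.2 Fintype.card_ne_zero
  calc ∑ x : ∀ v, X v,
        (if P x then (∑ a, f (Function.update x ℓ a)) / (Fintype.card (X ℓ) : ℝ) else 0)
      = (∑ x : ∀ v, X v, ∑ a, if P x then f (Function.update x ℓ a) else 0)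
          / (Fintype.card (X ℓ) : ℝ) := by
        rw [Finset.sum_div]
        refine Finset.sum_congr rfl fun x _ => ?_
        by_cases hp : P x
        · simp [hp, Finset.sum_div]
        · simp [hp]
    _ = (∑ a, ∑ x : ∀ v, X v, if P x then f (Function.update x ℓ a) else 0)
          / (Fintype.card (X ℓ) : ℝ) := by rw [Finset.sum_comm]
    _ = (∑ a : X ℓ, (Fintype.card (X ℓ) : ℝ)
          * ∑ x : ∀ v, X v, (if x ℓ = a then (if P x then f x else 0) else 0))
          / (Fintype.card (X ℓ) : ℝ) := by
        congr 1
        refine Finset.sum_congr rfl fun a _ => ?_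
        rw [← sum_update ℓ a (fun z => if P z then f z else 0)]
        refine Finset.sum_congr rfl fun x _ => ?_
        by_cases hp : P x
        · rw [if_pos hp, if_pos ((hP x a).2 hp)]
        · rw [if_neg hp, if_neg (fun hh => hp ((hP x a).1 hh))]
    _ = ∑ a : X ℓ, ∑ x : ∀ v, X v, (if x ℓ = a ∧ P x then f x else 0) := by
        rw [← Finset.mul_sum, mul_comm, mul_div_assoc, div_self hN, mul_one]
        refine Finset.sum_congr rfl fun a _ => Finset.sum_congr rfl fun x _ => ?_
        by_cases h1 : x ℓ = a <;> by_cases h2 : P x <;> simp [h1, h2]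
    _ = ∑ x : ∀ v, X v, (if P x then f x else 0) := sum_split ℓ P f

end Main

open SimpleGraph

lemma concat_isPath' {V : Type*} {G : SimpleGraph V} {u v w : V} {p : G.Walk u v}
    (hp : p.IsPath) (h : G.Adj v w) (hw : w ∉ p.support) : (p.concat h).IsPath := by
  rw [← Walk.isPath_reverse_iff, Walk.reverse_concat, Walk.cons_isPath_iff]
  refine ⟨hp.reverse, ?_⟩
  rw [Walk.support_reverse, List.mem_reverse]
  exact hw

lemma exists_leaf_edge {V : Type*} [Fintype V] [LinearOrder V] {G : SimpleGraph V}
    (hG : G.IsTree) (E : Finset (V × V))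
    (hE : ∀ p ∈ E, G.Adj p.1 p.2 ∧ p.1 < p.2) (hne : E.Nonempty) :
    ∃ p ∈ E, ∃ ℓ w : V, (p = (ℓ, w) ∨ p = (w, ℓ)) ∧ ℓ ≠ w ∧
      ∀ q ∈ E.erase p, ℓ ≠ q.1 ∧ ℓ ≠ q.2 := by
  classical
  have hNV : Nonempty V := hG.isConnected.nonempty
  obtain ⟨r⟩ := hNV
  have huniq := hG.existsUnique_path r
  choose P hP hPu using huniq
  -- dichotomy for adjacent vertices
  have step : ∀ u v (h : G.Adj u v), P v = (P u).concat h ∨ P u = (P v).concat h.symm := by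
    intro u v h
    by_cases hv : v ∈ (P u).support
    · right
      have hq : ((P u).takeUntil v hv).IsPath := (hP u).takeUntil hv
      have hqv : (P u).takeUntil v hv = P v := hPu v _ hq
      have hus : u ∉ ((P u).takeUntil v hv).support := by
        intro hu
        have hspec := (P u).take_spec hv
        have hnodup := (hP u).support_nodup
        rw [← hspec, Walk.support_append, List.nodup_append] at hnodup
        refine hnodup.2.2 u hu u ?_ rfl
        -- u is in the tail of the support of the second part
        have hvu : v ≠ u := h.symm.ne
        have hmem : u ∈ ((P u).dropUntil v hv).support := Walk.end_mem_support _
        rw [Walk.support_eq_cons] at hmem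
        rcases List.mem_cons.1 hmem with h' | h'
        · exact absurd h'.symm hvu
        · exact h'
      have hcp : (((P u).takeUntil v hv).concat h.symm).IsPath :=
        concat_isPath' hq h.symm hus
      rw [hqv] at hcp
      exact (hPu u _ hcp).symm
    · left
      exact (hPu v _ (concat_isPath' (hP u) h hv)).symm
  -- choose a deepest endpoint
  set S := E.biUnion (fun p => {p.1, p.2}) with hS
  have hSne : S.Nonempty := by
    obtain ⟨p, hp⟩ := hne
    exact ⟨p.1, Finset.mem_biUnion.2 ⟨p, hp, by simp⟩⟩
  obtain ⟨ℓ, hℓS, hmax⟩ := Finset.exists_max_image S (fun v => (P v).length) hSne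
  have hpar : ∀ u (h : G.Adj u ℓ), u ∈ S → P ℓ = (P u).concat h := by
    intro u h hu
    rcases step u ℓ h with h1 | h1
    · exact h1
    · exfalso
      have := hmax u hu
      rw [h1, Walk.length_concat] at this
      omega
  obtain ⟨p, hpE, hℓp⟩ := Finset.mem_biUnion.1 hℓS
  have hℓp' : ℓ = p.1 ∨ ℓ = p.2 := by simpa using hℓp
  -- the other endpoint of p
  obtain ⟨w, hor, hadjwℓ⟩ : ∃ w, (p = (ℓ, w) ∨ p = (w, ℓ)) ∧ G.Adj w ℓ := by
    rcases hℓp' with h1 | h1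
    · exact ⟨p.2, Or.inl (by rw [h1]), by rw [h1]; exact ((hE p hpE).1).symm⟩
    · exact ⟨p.1, Or.inr (by rw [h1]), by rw [h1]; exact (hE p hpE).1⟩
  have hwS : w ∈ S := by
    refine Finset.mem_biUnion.2 ⟨p, hpE, ?_⟩
    rcases hor with h1 | h1 <;> rw [h1] <;> simp
  have hℓw : ℓ ≠ w := fun hh => (hadjwℓ.ne (hh ▸ rfl))
  refine ⟨p, hpE, ℓ, w, hor, hℓw, ?_⟩
  intro q hq
  have hqE : q ∈ E := Finset.mem_of_mem_erase hq
  have hqp : q ≠ p := Finset.ne_of_mem_erase hq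
  by_contra hcon
  push_neg at hcon
  -- in either case get another neighbor u' of ℓ in S
  obtain ⟨u', hadju', hu'S, hqform⟩ :
      ∃ u', G.Adj u' ℓ ∧ u' ∈ S ∧ (q = (ℓ, u') ∨ q = (u', ℓ)) := by
    by_cases h1 : ℓ = q.1
    · refine ⟨q.2, ?_, Finset.mem_biUnion.2 ⟨q, hqE, by simp⟩, Or.inl ?_⟩
      · rw [h1]; exact ((hE q hqE).1).symm
      · rw [h1]
    · have h2 : ℓ = q.2 := hcon h1
      refine ⟨q.1, ?_, Finset.mem_biUnion.2 ⟨q, hqE, by simp⟩, Or.inr ?_⟩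
      · rw [h2]; exact (hE q hqE).1
      · rw [h2]
  -- both w and u' are the parent of ℓ
  have e1 := hpar w hadjwℓ hwS
  have e2 := hpar u' hadju' hu'S
  have hwu' : w = u' := by
    have := Walk.concat_inj (e1 ▸ e2)
    obtain ⟨hv, _⟩ := this
    exact hv
  -- now q and p are the same sorted pair
  subst hwu'
  have hp12 := (hE p hpE).2
  have hq12 := (hE q hqE).2
  apply hqp
  rcases hor with h1 | h1 <;> rcases hqform with h2 | h2
  · rw [h1, h2]
  · exfalso
    rw [h1] at hp12; rw [h2] at hq12
    exact absurd hq12 (asymm hp12)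
  · exfalso
    rw [h1] at hp12; rw [h2] at hq12
    exact absurd hq12 (asymm hp12)
  · rw [h1, h2]
lemma tree_aux {V : Type*} [Fintype V] [LinearOrder V] {X : V → Type*} [∀ v, Fintype (X v)]
    [∀ v, DecidableEq (X v)] (G : SimpleGraph V) (hG : G.IsTree) :
    ∀ (n : ℕ) (E : Finset (V × V)), E.card ≤ n →
      (∀ p ∈ E, G.Adj p.1 p.2 ∧ p.1 < p.2) →
      ∀ (f : (∀ v, X v) → ℝ) (φ : V → V → (∀ v, X v) → ℝ) (χ : ∀ v, X v → ℝ),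
        (∀ x, 0 < f x) → (∑ x, f x = 1) →
        (∀ p ∈ E, DependsOnlyOn {p.1, p.2} (φ p.1 p.2)) →
        (∀ x, f x = (∏ p ∈ E, φ p.1 p.2 x) * ∏ v, χ v (x v)) →
        ∀ x, f x = (∏ p ∈ E, marg2 f p.1 p.2 (x p.1) (x p.2) /
            (marg1 f p.1 (x p.1) * marg1 f p.2 (x p.2))) * ∏ v, marg1 f v (x v) := by
  intro n
  induction n with
  | zero =>
      intro E hcard hE f φ χ hpos hnorm hdep hfac x
      rw [Nat.le_zero, Finset.card_eq_zero] at hcard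
      subst hcard
      rw [Finset.prod_empty, one_mul]
      exact indep_case χ f hnorm (fun z => by simpa using hfac z) x
  | succ n IH =>
      intro E hcard hE f φ χ hpos hnorm hdep hfac x
      rcases E.eq_empty_or_nonempty with rfl | hEne
      · rw [Finset.prod_empty, one_mul]
        exact indep_case χ f hnorm (fun z => by simpa using hfac z) x
      obtain ⟨p, hpE, ℓ, w, hor, hℓw, hleaf⟩ := exists_leaf_edge hG E hE hEne
      have hwℓ : w ≠ ℓ := hℓw.symm
      -- basic cardinality bookkeeping
      have hcard0 : (E.erase p).card ≤ n := by
        rw [Finset.card_erase_of_mem hpE]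
        omega
      have hE0 : ∀ q ∈ E.erase p, G.Adj q.1 q.2 ∧ q.1 < q.2 :=
        fun q hq => hE q (Finset.mem_of_mem_erase hq)
      have hdep0 : ∀ q ∈ E.erase p, DependsOnlyOn {q.1, q.2} (φ q.1 q.2) :=
        fun q hq => hdep q (Finset.mem_of_mem_erase hq)
      -- nonemptiness
      have hNE : Nonempty (∀ v, X v) := nonempty_of_norm f hnorm
      obtain ⟨x₀⟩ := hNE
      have hNEX : ∀ v, Nonempty (X v) := fun v => ⟨x₀ v⟩
      have hNℓ : Nonempty (X ℓ) := hNEX ℓ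
      have hN0 : (Fintype.card (X ℓ) : ℝ) ≠ 0 := Nat.cast_ne_zero.2 Fintype.card_ne_zero
      have hN0' : (0:ℝ) < (Fintype.card (X ℓ) : ℝ) := by
        exact_mod_cast Fintype.card_pos
      -- the pieces of the factorization
      set φ₂ : (∀ v, X v) → ℝ := fun z => φ p.1 p.2 z * χ ℓ (z ℓ) with hφ₂def
      set ψ : (∀ v, X v) → ℝ := fun z =>
        (∏ q ∈ E.erase p, φ q.1 q.2 z) * ∏ v ∈ Finset.univ.erase ℓ, χ v (z v) with hψdef
      have hsplit : ∀ z, f z = φ₂ z * ψ z := by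
        intro z
        rw [hfac z, ← Finset.mul_prod_erase E _ hpE,
          ← Finset.mul_prod_erase Finset.univ (fun v => χ v (z v)) (Finset.mem_univ ℓ)]
        simp only [hφ₂def, hψdef]
        ring
      have hψupd : ∀ z a, ψ (Function.update z ℓ a) = ψ z := by
        intro z a
        simp only [hψdef]
        congr 1
        · refine Finset.prod_congr rfl fun q hq => ?_
          refine hdep0 q hq _ _ (fun u hu => ?_)
          rcases hu with hu | hu
          · subst hu; exact Function.update_of_ne (hleaf q hq).1.symm a z
          · rw [Set.mem_singleton_iff] at hu
            subst hu; exact Function.update_of_ne (hleaf q hq).2.symm a z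
        · refine Finset.prod_congr rfl fun v hv => ?_
          rw [Function.update_of_ne (Finset.ne_of_mem_erase hv) a z]
      have hφ₂dep : ∀ z z', z ℓ = z' ℓ → z w = z' w → φ₂ z = φ₂ z' := by
        intro z z' h1 h2
        simp only [hφ₂def]
        rw [h1]
        congr 1
        refine hdep p hpE _ _ (fun u hu => ?_)
        have : u = ℓ ∨ u = w := by
          rcases hor with h3 | h3 <;> rw [h3] at hu <;>
            simpa [or_comm] using hu
        rcases this with rfl | rfl
        · exact h1
        · exact h2
      -- the uniformized density
      set g : (∀ v, X v) → ℝ := fun z =>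
        (∑ a, f (Function.update z ℓ a)) / (Fintype.card (X ℓ) : ℝ) with hgdef
      have hgpos : ∀ z, 0 < g z := by
        intro z
        refine div_pos (Finset.sum_pos (fun a _ => hpos _) Finset.univ_nonempty) hN0'
      have hgnorm : ∑ z, g z = 1 := by
        have h1 := sum_ite_avg ℓ f (fun _ => True) (fun _ _ => Iff.rfl)
        simpa [hgdef] using h1.trans hnorm
      -- sum over the leaf coordinate of φ₂, as a function of the w-coordinate
      set Φw : X w → ℝ := fun b =>
        ∑ a, φ₂ (Function.update (Function.update x₀ w b) ℓ a) with hΦwdef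
      have hΦ : ∀ z, ∑ a, φ₂ (Function.update z ℓ a) = Φw (z w) := by
        intro z
        refine Finset.sum_congr rfl fun a _ => ?_
        refine hφ₂dep _ _ ?_ ?_
        · rw [Function.update_self, Function.update_self]
        · rw [Function.update_of_ne hwℓ, Function.update_of_ne hwℓ, Function.update_self]
      have hgΦψ : ∀ z, g z = Φw (z w) * ψ z / (Fintype.card (X ℓ) : ℝ) := by
        intro z
        rw [hgdef]
        simp only
        congr 1
        rw [← hΦ z]
        rw [Finset.sum_congr rfl (fun a _ => hsplit (Function.update z ℓ a))]
        rw [Finset.sum_congr rfl (fun a _ => by rw [hψupd z a] :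
          ∀ a ∈ Finset.univ, φ₂ (Function.update z ℓ a) * ψ (Function.update z ℓ a)
            = φ₂ (Function.update z ℓ a) * ψ z), ← Finset.sum_mul]
      -- new singleton factors
      set χ' : ∀ v, X v → ℝ := Function.update
        (Function.update χ w (fun b => χ w b * Φw b)) ℓ
        (fun _ => (Fintype.card (X ℓ) : ℝ)⁻¹) with hχ'def
      have hχ'ℓ : ∀ c, χ' ℓ c = (Fintype.card (X ℓ) : ℝ)⁻¹ := by
        intro c; rw [hχ'def, Function.update_self]
      have hχ'w : ∀ b, χ' w b = χ w b * Φw b := by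
        intro b; rw [hχ'def, Function.update_of_ne hwℓ, Function.update_self]
      have hχ'v : ∀ v, v ≠ ℓ → v ≠ w → χ' v = χ v := by
        intro v h1 h2
        rw [hχ'def, Function.update_of_ne h1, Function.update_of_ne h2]
      have hgfac : ∀ z, g z = (∏ q ∈ E.erase p, φ q.1 q.2 z) * ∏ v, χ' v (z v) := by
        intro z
        rw [hgΦψ z,
          ← Finset.mul_prod_erase Finset.univ (fun v => χ' v (z v)) (Finset.mem_univ ℓ),
          ← Finset.mul_prod_erase _ (fun v => χ' v (z v))
            (Finset.mem_erase.2 ⟨hwℓ, Finset.mem_univ w⟩), hχ'ℓ, hχ'w]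
        have hrest : ∏ v ∈ (Finset.univ.erase ℓ).erase w, χ' v (z v)
            = ∏ v ∈ (Finset.univ.erase ℓ).erase w, χ v (z v) := by
          refine Finset.prod_congr rfl fun v hv => ?_
          rw [hχ'v v (Finset.ne_of_mem_erase (Finset.mem_of_mem_erase hv))
            (Finset.ne_of_mem_erase hv)]
        rw [hrest, hψdef]
        simp only
        rw [← Finset.mul_prod_erase _ (fun v => χ v (z v))
            (Finset.mem_erase.2 ⟨hwℓ, Finset.mem_univ w⟩)]
        field_simp
      -- induction hypothesis applied to g
      have hIH := IH (E.erase p) hcard0 hE0 g φ χ' hgpos hgnorm hdep0 hgfac x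
      -- marginal transfer
      have hM1 : ∀ v, v ≠ ℓ → ∀ a, marg1 g v a = marg1 f v a := by
        intro v hv a
        have h1 := sum_ite_avg ℓ f (fun z => z v = a)
          (fun z c => by
            show Function.update z ℓ c v = a ↔ z v = a
            rw [Function.update_of_ne hv c z])
        simpa [marg1, hgdef] using h1
      have hM2 : ∀ v w', v ≠ ℓ → w' ≠ ℓ → ∀ (a : X v) (b : X w'),
          marg2 g v w' a b = marg2 f v w' a b := by
        intro v w' hv hw' a b
        have h1 := sum_ite_avg ℓ f (fun z => z v = a ∧ z w' = b)
          (fun z c => by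
            show Function.update z ℓ c v = a ∧ Function.update z ℓ c w' = b ↔ z v = a ∧ z w' = b
            rw [Function.update_of_ne hv c z, Function.update_of_ne hw' c z])
        simpa [marg2, hgdef] using h1
      have hM3 : ∀ a, marg1 g ℓ a = (Fintype.card (X ℓ) : ℝ)⁻¹ := by
        intro a
        have step1 : marg1 g ℓ a
            = (∑ x_1 : ∀ v, X v, ∑ b, if x_1 ℓ = a then f (Function.update x_1 ℓ b) else 0)
              / (Fintype.card (X ℓ) : ℝ) := by
          rw [marg1, Finset.sum_div]
          refine Finset.sum_congr rfl fun z _ => ?_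
          by_cases hz : z ℓ = a
          · simp [hz, hgdef, Finset.sum_div]
          · simp [hz]
        rw [step1, Finset.sum_comm]
        rw [Finset.sum_congr rfl (fun b (_ : b ∈ Finset.univ) => sum_ite_update ℓ b a f)]
        have : ∑ b : X ℓ, ∑ x_1 : ∀ v, X v, (if x_1 ℓ = b then f x_1 else 0) = 1 := by
          rw [← hnorm, ← sum_marg1 f ℓ]
          rfl
        rw [this, one_div]
      -- the key identity: f x * (marg1 f w) = g x * N * (marg2 f ℓ w)
      set T : X ℓ → ℝ := fun c =>
        ∑ z : ∀ v, X v, if z ℓ = c ∧ z w = x w then ψ z else 0 with hTdef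
      have hsplitT : ∀ c, T c
          = ∑ z : ∀ v, X v, if z ℓ = c then (if z w = x w then ψ z else 0) else 0 := by
        intro c
        refine Finset.sum_congr rfl fun z _ => ?_
        by_cases h1 : z ℓ = c <;> by_cases h2 : z w = x w <;> simp [h1, h2]
      have hT : ∀ c, T c = T (x ℓ) := by
        intro c
        have hF : ∀ (z : ∀ v, X v) (b : X ℓ),
            (fun z : ∀ v, X v => if z w = x w then ψ z else 0) (Function.update z ℓ b)
              = (fun z : ∀ v, X v => if z w = x w then ψ z else 0) z := by
          intro z b
          simp only
          rw [Function.update_of_ne hwℓ b z, hψupd]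
        rw [hsplitT c, hsplitT (x ℓ)]
        exact sum_ite_fixed ℓ (x ℓ) c _ hF
      have k1 : marg2 f ℓ w (x ℓ) (x w) = φ₂ x * T (x ℓ) := by
        rw [marg2, hTdef]
        simp only
        rw [Finset.mul_sum]
        refine Finset.sum_congr rfl fun z _ => ?_
        by_cases hc : z ℓ = x ℓ ∧ z w = x w
        · rw [if_pos hc, if_pos hc, hsplit z, hφ₂dep z x hc.1 hc.2]
        · rw [if_neg hc, if_neg hc, mul_zero]
      have k2 : marg1 f w (x w)
          = (∑ c, φ₂ (Function.update x ℓ c)) * T (x ℓ) := by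
        have h1 : marg1 f w (x w)
            = ∑ c : X ℓ, ∑ z : ∀ v, X v, (if z ℓ = c ∧ z w = x w then f z else 0) := by
          rw [marg1, ← sum_split ℓ (fun z => z w = x w) f]
        rw [h1, Finset.sum_mul]
        refine Finset.sum_congr rfl fun c _ => ?_
        rw [← hT c, hTdef]
        simp only
        rw [Finset.mul_sum]
        refine Finset.sum_congr rfl fun z _ => ?_
        by_cases hc : z ℓ = c ∧ z w = x w
        · rw [if_pos hc, if_pos hc, hsplit z]
          congr 1
          refine hφ₂dep z _ ?_ ?_
          · rw [Function.update_self, hc.1]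
          · rw [Function.update_of_ne hwℓ, hc.2]
        · rw [if_neg hc, if_neg hc, mul_zero]
      have k3 : g x * (Fintype.card (X ℓ) : ℝ)
          = (∑ c, φ₂ (Function.update x ℓ c)) * ψ x := by
        rw [hgdef]
        simp only
        rw [div_mul_cancel₀ _ hN0]
        rw [Finset.sum_congr rfl (fun c _ => hsplit (Function.update x ℓ c))]
        rw [Finset.sum_congr rfl (fun c (_ : c ∈ Finset.univ) => by rw [hψupd x c] :
          ∀ c ∈ Finset.univ, φ₂ (Function.update x ℓ c) * ψ (Function.update x ℓ c)
            = φ₂ (Function.update x ℓ c) * ψ x), ← Finset.sum_mul]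
      have hK : f x * marg1 f w (x w)
          = g x * (Fintype.card (X ℓ) : ℝ) * marg2 f ℓ w (x ℓ) (x w) := by
        rw [hsplit x, k1, k2, k3]
        ring
      -- positivity of marginals
      have hm1 : ∀ v a, 0 < marg1 f v a := marg1_pos f hpos x₀
      have hm1g : ∀ v a, 0 < marg1 g v a := marg1_pos g hgpos x₀
      -- rewrite the IH using marginal transfer
      have hA : (∏ q ∈ E.erase p, marg2 g q.1 q.2 (x q.1) (x q.2) /
            (marg1 g q.1 (x q.1) * marg1 g q.2 (x q.2)))
          = ∏ q ∈ E.erase p, marg2 f q.1 q.2 (x q.1) (x q.2) /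
            (marg1 f q.1 (x q.1) * marg1 f q.2 (x q.2)) := by
        refine Finset.prod_congr rfl fun q hq => ?_
        rw [hM2 q.1 q.2 (hleaf q hq).1.symm (hleaf q hq).2.symm,
          hM1 q.1 (hleaf q hq).1.symm, hM1 q.2 (hleaf q hq).2.symm]
      have hB : ∏ v, marg1 g v (x v)
          = (Fintype.card (X ℓ) : ℝ)⁻¹ * ∏ v ∈ Finset.univ.erase ℓ, marg1 f v (x v) := by
        rw [← Finset.mul_prod_erase Finset.univ (fun v => marg1 g v (x v))
          (Finset.mem_univ ℓ), hM3]
        congr 1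
        refine Finset.prod_congr rfl fun v hv => ?_
        rw [hM1 v (Finset.ne_of_mem_erase hv)]
      rw [hA, hB] at hIH
      -- final assembly
      have hRp : (marg2 f p.1 p.2 (x p.1) (x p.2) /
            (marg1 f p.1 (x p.1) * marg1 f p.2 (x p.2)))
          = marg2 f ℓ w (x ℓ) (x w) / (marg1 f ℓ (x ℓ) * marg1 f w (x w)) := by
        rcases hor with h1 | h1
        · rw [h1]
        · rw [h1]
          simp only
          rw [marg2_symm f w ℓ (x w) (x ℓ), mul_comm]
      rw [← Finset.mul_prod_erase E _ hpE,
        ← Finset.mul_prod_erase Finset.univ (fun v => marg1 f v (x v)) (Finset.mem_univ ℓ),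
        hRp]
      have hfx : f x = g x * (Fintype.card (X ℓ) : ℝ) * marg2 f ℓ w (x ℓ) (x w)
          / marg1 f w (x w) := by
        rw [← hK, mul_div_assoc, div_self (hm1 w (x w)).ne', mul_one]
      rw [hfx, hIH]
      have halg : ∀ (A B N m2 m1l m1w : ℝ), N ≠ 0 → m1l ≠ 0 → m1w ≠ 0 →
          A * (N⁻¹ * B) * N * m2 / m1w = m2 / (m1l * m1w) * A * (m1l * B) := by
        intro A B N m2 m1l m1w hN hl hw
        field_simp
      exact halg _ _ _ _ _ _ hN0 (hm1 ℓ (x ℓ)).ne' (hm1 w (x w)).ne'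

/-- If a (discrete, positive) distribution factorizes with respect to a tree
`G` — the edges being listed once as the ordered pairs `(p.1, p.2)` with
`p.1 < p.2` — then its density satisfies
`f(x) = ∏_{{v,w} ∈ E} f_{vw}(x_v,x_w)/(f_v(x_v) f_w(x_w)) · ∏_v f_v(x_v)`. -/
theorem tree_factorization_in_marginals
    {V : Type*} [Fintype V] [LinearOrder V]
    {X : V → Type*} [∀ v, Fintype (X v)] [∀ v, DecidableEq (X v)]
    (G : SimpleGraph V) [DecidableRel G.Adj] (hG : G.IsTree)
    (edges : Finset (V × V))
    (hedges : edges = Finset.univ.filter (fun p : V × V => G.Adj p.1 p.2 ∧ p.1 < p.2))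
    (f : (∀ v, X v) → ℝ) (hpos : ∀ x, 0 < f x) (hnorm : ∑ x, f x = 1)
    (φ : V → V → (∀ v, X v) → ℝ)
    (hdep : ∀ p ∈ edges, DependsOnlyOn {p.1, p.2} (φ p.1 p.2))
    (hfac : ∀ x, f x = ∏ p ∈ edges, φ p.1 p.2 x) :
    ∀ x, f x =
      (∏ p ∈ edges,
          marg2 f p.1 p.2 (x p.1) (x p.2) /
            (marg1 f p.1 (x p.1) * marg1 f p.2 (x p.2))) *
        ∏ v, marg1 f v (x v) := by
  have hE : ∀ p ∈ edges, G.Adj p.1 p.2 ∧ p.1 < p.2 := by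
    intro p hp
    rw [hedges] at hp
    exact (Finset.mem_filter.1 hp).2
  exact tree_aux G hG edges.card edges le_rfl hE f φ (fun _ _ => 1) hpos hnorm hdep
    (fun z => by simpa using hfac z)
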